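/- Let W(v_c; v_1,...,v_n) be the wheel graph (center v_c joined to every vertex of the cycle v_1...v_n), embedded in ℝ² by points p_c, p_1,...,p_n such that for every i (indices cyclic mod n) the points p_i, p_{i+1}, p_c are not collinear. Then the stress defined by ω_{i,i+1} = −1/[p_i p_{i+1} p_c] on cycle edges and ω_{i,c} = [p_{i−1} p_i p_{i+1}]/([p_{i−1} p_i p_c][p_i p_{i+1} p_c]) on spokes, where [pqr] denotes twice the signed area det of the triangle, is an equilibrium stress for this embedding. -/

import Mathlib

open Finset

/-- `[p q r]`: twice the signed area of the triangle `p q r` in `ℝ²`,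
i.e. the determinant of the 3×3 matrix with columns `(pₓ,p_y,1)`, `(qₓ,q_y,1)`,
`(rₓ,r_y,1)`. -/
def br2 (p q r : Fin 2 → ℝ) : ℝ :=
  (q 0 - p 0) * (r 1 - p 1) - (q 1 - p 1) * (r 0 - p 0)

lemma key (a b c q : Fin 2 → ℝ) (h1 : br2 a b q ≠ 0) (h2 : br2 b c q ≠ 0) :
    (br2 a b c / (br2 a b q * br2 b c q)) • (q - b) +
      (-1 / br2 a b q) • (a - b) + (-1 / br2 b c q) • (c - b) = 0 := by
  funext x
  fin_cases x <;>
  · simp only [Pi.add_apply, Pi.smul_apply, Pi.sub_apply, Pi.zero_apply, smul_eq_mul, Fin.zero_eta, Fin.mk_one]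
    field_simp
    simp only [br2] at *
    ring

/-- For a wheel `W(v_c; v_1 … v_n)` embedded in `ℝ²` with all
triangles `(p_i, p_{i+1}, p_c)` nondegenerate, the stress
`ω_{i,i+1} = -1/[p_i p_{i+1} p_c]` on cycle edges and
`ω_{i,c} = [p_{i-1} p_i p_{i+1}] / ([p_{i-1} p_i p_c][p_i p_{i+1} p_c])` on
spokes is an equilibrium stress: equilibrium holds at the center and at every
base vertex. -/
theorem stmt5
    (n : ℕ) [NeZero n] (hn : 3 ≤ n)
    (p : ZMod n → Fin 2 → ℝ) (pc : Fin 2 → ℝ)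
    (hnd : ∀ i : ZMod n, br2 (p i) (p (i + 1)) pc ≠ 0)
    (s t : ZMod n → ℝ)
    (hs : ∀ i, s i = -1 / br2 (p i) (p (i + 1)) pc)
    (ht : ∀ i, t i = br2 (p (i - 1)) (p i) (p (i + 1)) /
      (br2 (p (i - 1)) (p i) pc * br2 (p i) (p (i + 1)) pc)) :
    (∑ i : ZMod n, t i • (p i - pc) = 0) ∧
    ∀ i : ZMod n,
      t i • (pc - p i) + s (i - 1) • (p (i - 1) - p i) +
        s i • (p (i + 1) - p i) = 0 := by
  have hvert : ∀ i : ZMod n,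
      t i • (pc - p i) + s (i - 1) • (p (i - 1) - p i) +
        s i • (p (i + 1) - p i) = 0 := by
    intro i
    have h1 : br2 (p (i - 1)) (p i) pc ≠ 0 := by
      have := hnd (i - 1); rwa [sub_add_cancel] at this
    have h2 := hnd i
    rw [ht i, hs i, hs (i - 1), sub_add_cancel]
    exact key (p (i - 1)) (p i) (p (i + 1)) pc h1 h2
  refine ⟨?_, hvert⟩
  have hsum : ∀ i : ZMod n, t i • (p i - pc) =
      s (i - 1) • (p (i - 1) - p i) + s i • (p (i + 1) - p i) := by
    intro i
    have := hvert i
    have h : t i • (pc - p i) = - (t i • (p i - pc)) := by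
      rw [← smul_neg, neg_sub]
    rw [h, add_assoc, neg_add_eq_zero] at this
    exact this
  calc ∑ i : ZMod n, t i • (p i - pc)
      = ∑ i : ZMod n, (s (i - 1) • (p (i - 1) - p i) + s i • (p (i + 1) - p i)) := by
        exact Finset.sum_congr rfl fun i _ => hsum i
    _ = ∑ i : ZMod n, s (i - 1) • (p (i - 1) - p i) +
        ∑ i : ZMod n, s i • (p (i + 1) - p i) := Finset.sum_add_distrib
    _ = ∑ i : ZMod n, s i • (p i - p (i + 1)) +
        ∑ i : ZMod n, s i • (p (i + 1) - p i) := by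
        congr 1
        exact Fintype.sum_equiv (Equiv.subRight (1 : ZMod n)) _ _
          (by intro x; simp [sub_add_cancel])
    _ = ∑ i : ZMod n, (s i • (p i - p (i + 1)) + s i • (p (i + 1) - p i)) :=
        Finset.sum_add_distrib.symm
    _ = 0 := by
        apply Finset.sum_eq_zero
        intro i _
        rw [← smul_add]
        simp
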